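/- Let R be a commutative ring of weak global dimension at most 1 such that Spec R contains an infinite strictly ascending chain of prime ideals p₀ ⊊ p₁ ⊊ p₂ ⊊ ⋯. Then there exists a prime ideal p of R such that pR_p is a nonzero idempotent ideal of R_p, i.e., (pR_p)² = pR_p ≠ 0. -/

import Mathlib

open CategoryTheory TensorProduct

universe u

/-- `f : R → S` is an epimorphism in the category of rings. -/
def IsRingEpi {R S : Type u} [Ring R] [Ring S] (f : R →+* S) : Prop :=
  ∀ (T : Type u) [Ring T], ∀ g₁ g₂ : S →+* T, g₁.comp f = g₂.comp f → g₁ = g₂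

/-- `Tor_i^R(M, N) = 0`. -/
def TorIsZero (R : Type u) [CommRing R] (i : ℕ)
    (M N : Type u) [AddCommGroup M] [Module R M] [AddCommGroup N] [Module R N] : Prop :=
  Limits.IsZero (((Tor (ModuleCat.{u} R) i).obj (ModuleCat.of R M)).obj (ModuleCat.of R N))

/-- `R` has weak global dimension at most one: `Tor_2^R` vanishes identically. -/
def WeakGlobalDimLE1 (R : Type u) [CommRing R] : Prop :=
  ∀ M N : ModuleCat.{u} R, Limits.IsZero (((Tor (ModuleCat.{u} R) 2).obj M).obj N)

/-- A homological ring epimorphism: a ring epimorphism with `Tor_i^R(S,S) = 0` for `i ≥ 1`. -/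
def IsHomologicalEpi (R S : Type u) [CommRing R] [CommRing S] [Algebra R S] : Prop :=
  IsRingEpi (algebraMap R S) ∧ ∀ i : ℕ, 1 ≤ i → TorIsZero R i S S

section ModuleLemmas

variable {R : Type u} [CommRing R]

lemma flat_prod {A B : Type u} [AddCommGroup A] [Module R A]
    [AddCommGroup B] [Module R B] [Module.Flat R A] [Module.Flat R B] :
    Module.Flat R (A × B) := by
  apply Module.Flat.of_forall_isTrivialRelation
  intro ι f x hx
  have hA : ∑ i, f i • (x i).1 = 0 := by
    have := congrArg Prod.fst hx; simpa [Prod.fst_sum] using this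
  have hB : ∑ i, f i • (x i).2 = 0 := by
    have := congrArg Prod.snd hx; simpa [Prod.snd_sum] using this
  obtain ⟨κ₁, a₁, y₁, h₁, h₁'⟩ := Module.Flat.isTrivialRelation_of_sum_smul_eq_zero hA
  obtain ⟨κ₂, a₂, y₂, h₂, h₂'⟩ := Module.Flat.isTrivialRelation_of_sum_smul_eq_zero hB
  refine ⟨κ₁ + κ₂, fun i => Sum.elim (a₁ i) (a₂ i) ∘ finSumFinEquiv.symm,
    Sum.elim (fun j => (y₁ j, (0 : B))) (fun j => ((0 : A), y₂ j)) ∘ finSumFinEquiv.symm,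
    fun i => ?_, fun j => ?_⟩
  · have e1 : (x i).1 = ∑ j, a₁ i j • y₁ j := h₁ i
    have e2 : (x i).2 = ∑ j, a₂ i j • y₂ j := h₂ i
    apply Prod.ext <;>
      simp [Prod.fst_sum, Prod.snd_sum, Fin.sum_univ_add, ← e1, ← e2]
  · induction j using Fin.addCases with
    | left j => simpa using h₁' j
    | right j => simpa using h₂' j

noncomputable def splitEquiv {X B : Type u} [AddCommGroup X] [Module R X]
    [AddCommGroup B] [Module R B] (h : X →ₗ[R] B) (s : B →ₗ[R] X)
    (hs : h ∘ₗ s = LinearMap.id) : X ≃ₗ[R] (↥(LinearMap.ker h) × B) := by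
  have hsapp : ∀ b, h (s b) = b := fun b => congrFun (congrArg DFunLike.coe hs) b
  refine LinearEquiv.ofLinear
    ((LinearMap.codRestrict (LinearMap.ker h) (LinearMap.id - s ∘ₗ h) ?_).prod h)
    ((LinearMap.ker h).subtype ∘ₗ LinearMap.fst R _ _ + s ∘ₗ LinearMap.snd R _ _) ?_ ?_
  · intro x
    simp [LinearMap.mem_ker, hsapp]
  · ext z <;>
      first
        | simp [hsapp]
        | simp [hsapp, LinearMap.mem_ker.mp z.2]
  · ext x
    simp

end ModuleLemmas


section Main

variable {R : Type u} [CommRing R]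

open LinearMap in
lemma pure_of_exact {X A₁ A₂ A₃ : Type u} [AddCommGroup X] [Module R X]
    [AddCommGroup A₁] [Module R A₁] [AddCommGroup A₂] [Module R A₂]
    [AddCommGroup A₃] [Module R A₃] (d₃ : A₃ →ₗ[R] A₂) (d₂ : A₂ →ₗ[R] A₁)
    (hcomp : d₂ ∘ₗ d₃ = 0)
    (hex : ∀ t, lTensor X d₂ t = 0 → ∃ s, lTensor X d₃ s = t) :
    Function.Injective (lTensor X (LinearMap.range d₂).subtype) := by
  have hfact : (LinearMap.range d₂).subtype ∘ₗ d₂.rangeRestrict = d₂ := by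
    ext a; rfl
  have hzero : d₂.rangeRestrict ∘ₗ d₃ = 0 := by
    ext a
    simpa using LinearMap.congr_fun hcomp a
  rw [injective_iff_map_eq_zero]
  intro ζ hζ
  obtain ⟨η, hη⟩ := lTensor_surjective X d₂.surjective_rangeRestrict ζ
  have h1 : lTensor X d₂ η = 0 := by
    rw [← hfact, lTensor_comp, LinearMap.comp_apply, hη, hζ]
  obtain ⟨θ, hθ⟩ := hex η h1
  rw [← hη, ← hθ, ← LinearMap.comp_apply, ← lTensor_comp, hzero, lTensor_zero,
    LinearMap.zero_apply]

open LinearMap in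
/-- A quotient of a flat module by a "pure" submodule is flat. -/
lemma flat_quot_of_pure {M : Type u} [AddCommGroup M] [Module R M] [Module.Flat R M]
    (Z : Submodule R M)
    (hpure : ∀ (X : Type u) [AddCommGroup X] [Module R X],
      Function.Injective (lTensor X Z.subtype)) :
    Module.Flat R (M ⧸ Z) := by
  rw [Module.Flat.iff_lTensor_injective']
  intro I
  rw [injective_iff_map_eq_zero]
  intro ξ hξ
  -- lift ξ along M ⊗ I → (M ⧸ Z) ⊗ I
  obtain ⟨η, hη⟩ := rTensor_surjective (↥I) (Submodule.mkQ_surjective Z) ξ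
  -- the image of η in M
  set m : M := TensorProduct.rid R M (lTensor M I.subtype η) with hm
  have hcomm : rTensor R Z.mkQ (lTensor M I.subtype η) = 0 := by
    have : rTensor R Z.mkQ ∘ₗ lTensor M I.subtype
        = lTensor (M ⧸ Z) I.subtype ∘ₗ rTensor (↥I) Z.mkQ := by
      rw [rTensor_comp_lTensor, lTensor_comp_rTensor]
    have h2 := congrFun (congrArg DFunLike.coe this) η
    simp only [LinearMap.comp_apply] at h2
    rw [h2, hη, hξ]
  have hmZ : m ∈ Z := by
    have hnat : ∀ t : M ⊗[R] R, Z.mkQ (TensorProduct.rid R M t)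
        = TensorProduct.rid R (M ⧸ Z) (rTensor R Z.mkQ t) := by
      intro t
      induction t using TensorProduct.induction_on with
      | zero => simp
      | tmul a b => simp
      | add a b ha hb => simp [map_add, ha, hb]
    have := hnat (lTensor M I.subtype η)
    rw [hcomm] at this
    have h5 : Z.mkQ m = 0 := by simpa [hm] using this
    rwa [Submodule.mkQ_apply, Submodule.Quotient.mk_eq_zero] at h5
  have hmI : m ∈ I • (⊤ : Submodule R M) := by
    rw [hm]
    clear hcomm hmZ hη hm
    induction η using TensorProduct.induction_on with
    | zero => simp
    | tmul a b => simpa using Submodule.smul_mem_smul b.2 (Submodule.mem_top (x := a))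
    | add a b ha hb => simpa [map_add] using Submodule.add_mem _ ha hb
  -- purity: m ∈ I • Z
  have hmIZ : m ∈ I • Z := by
    have h1 : ((1 : R ⧸ I) ⊗ₜ[R] (⟨m, hmZ⟩ : Z) : (R ⧸ I) ⊗[R] Z) = 0 := by
      apply hpure (R ⧸ I)
      have : lTensor (R ⧸ I) Z.subtype ((1 : R ⧸ I) ⊗ₜ[R] (⟨m, hmZ⟩ : Z))
          = (1 : R ⧸ I) ⊗ₜ[R] m := rfl
      rw [this, map_zero]
      apply (TensorProduct.quotTensorEquivQuotSMul M I).injective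
      rw [(TensorProduct.quotTensorEquivQuotSMul M I).map_zero]
      have h2 : ((1 : R ⧸ I) : R ⧸ I) = Ideal.Quotient.mk I 1 := rfl
      rw [h2, TensorProduct.quotTensorEquivQuotSMul_mk_tmul]
      simpa [Submodule.Quotient.mk_eq_zero] using hmI
    have h3 := congrArg (TensorProduct.quotTensorEquivQuotSMul (↥Z) I) h1
    rw [(TensorProduct.quotTensorEquivQuotSMul (↥Z) I).map_zero] at h3
    have h2 : ((1 : R ⧸ I) : R ⧸ I) = Ideal.Quotient.mk I 1 := rfl
    rw [h2, TensorProduct.quotTensorEquivQuotSMul_mk_tmul, one_smul] at h3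
    rw [Submodule.Quotient.mk_eq_zero] at h3
    have h4 := Submodule.mem_map_of_mem (f := Z.subtype) h3
    rwa [Submodule.map_smul'', Submodule.map_top, Submodule.range_subtype] at h4
  -- build a preimage in Z ⊗ I
  have hrep : ∃ θ : Z ⊗[R] I,
      TensorProduct.rid R M (lTensor M I.subtype (rTensor (↥I) Z.subtype θ)) = m := by
    refine Submodule.smul_induction_on hmIZ ?_ ?_
    · intro a ha z hz
      exact ⟨(⟨z, hz⟩ : Z) ⊗ₜ[R] (⟨a, ha⟩ : I), by simp⟩
    · rintro u v ⟨θᵤ, hu⟩ ⟨θᵥ, hv⟩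
      exact ⟨θᵤ + θᵥ, by simp [map_add, hu, hv]⟩
  obtain ⟨θ, hθ⟩ := hrep
  set η' : M ⊗[R] I := rTensor (↥I) Z.subtype θ with hη'
  have heq : η = η' := by
    have hinj : Function.Injective (lTensor M I.subtype) :=
      (Module.Flat.iff_lTensor_injective').mp inferInstance I
    apply hinj
    apply (TensorProduct.rid R M).injective
    rw [hθ, ← hm]
  rw [← hη, heq, hη', ← LinearMap.comp_apply, ← rTensor_comp]
  have : Z.mkQ ∘ₗ Z.subtype = 0 := by ext z; simp
  rw [this, rTensor_zero, LinearMap.zero_apply]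


open LinearMap Limits in
lemma tor2_exact (hR : WeakGlobalDimLE1 R) (N : ModuleCat.{u} R)
    (P : ProjectiveResolution N) (X : ModuleCat.{u} R) :
    ∀ t : (X ⊗[R] (P.complex.X 2) : Type u),
      lTensor (X : Type u) (P.complex.d 2 1).hom t = 0 →
      ∃ s, lTensor (X : Type u) (P.complex.d 3 2).hom s = t := by
  set F := (MonoidalCategory.tensoringLeft (ModuleCat.{u} R)).obj X with hF
  have hzero : IsZero ((F.leftDerived 2).obj N) := hR X N
  set Kc := (F.mapHomologicalComplex (ComplexShape.down ℕ)).obj P.complex with hKc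
  have hzero2 : IsZero (Kc.homology 2) :=
    hzero.of_iso (P.isoLeftDerivedObj F 2).symm
  have hexact : Kc.ExactAt 2 := (Kc.exactAt_iff_isZero_homology 2).mpr hzero2
  have hexact2 : (Kc.sc' 3 2 1).Exact :=
    (HomologicalComplex.exactAt_iff' Kc 3 2 1 (by simp) (by simp)).mp hexact
  rw [ShortComplex.moduleCat_exact_iff] at hexact2
  intro t ht
  obtain ⟨s, hs⟩ := hexact2 t ht
  exact ⟨s, hs⟩

open LinearMap Limits in
lemma syzygy_flat (hR : WeakGlobalDimLE1 R) (N : ModuleCat.{u} R) :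
    ∃ (M : Type u) (_ : AddCommGroup M) (_ : Module R M) (K : Submodule R M),
      Module.Projective R M ∧ Module.Flat R ↥K ∧ Nonempty ((M ⧸ K) ≃ₗ[R] N) := by
  obtain ⟨P⟩ := (HasProjectiveResolution.out (Z := N))
  set M := (P.complex.X 0 : Type u) with hM
  set d10 : (P.complex.X 1 : Type u) →ₗ[R] M := (P.complex.d 1 0).hom with hd10
  set d21 : (P.complex.X 2 : Type u) →ₗ[R] (P.complex.X 1 : Type u) := (P.complex.d 2 1).hom
    with hd21
  set d32 : (P.complex.X 3 : Type u) →ₗ[R] (P.complex.X 2 : Type u) := (P.complex.d 3 2).hom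
    with hd32
  set K : Submodule R M := LinearMap.range d10 with hK
  -- projectivity of the resolution terms as modules
  have hproj : ∀ n, Module.Projective R (P.complex.X n : Type u) := by
    intro n
    rw [IsProjective.iff_projective]
    exact P.projective n
  have hprojM : Module.Projective R M := hproj 0
  -- exactness of the complex in degree 1: range d21 = ker d10
  have hex1 : LinearMap.range d21 = LinearMap.ker d10 := by
    have h := P.complex_exactAt_succ 0
    have h2 : (P.complex.sc' 2 1 0).Exact :=
      (HomologicalComplex.exactAt_iff' P.complex 2 1 0 (by simp) (by simp)).mp h
    exact (ShortComplex.moduleCat_exact_iff_range_eq_ker _).mp h2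
  -- hcomp : d21 ∘ d32 = 0
  have hcomp : d21 ∘ₗ d32 = 0 := congrArg ModuleCat.Hom.hom (P.complex.d_comp_d 3 2 1)
  -- purity of range d21 in P₁
  have hpure : ∀ (X : Type u) [AddCommGroup X] [Module R X],
      Function.Injective (lTensor X (LinearMap.range d21).subtype) := by
    intro X _ _
    exact pure_of_exact d32 d21 hcomp (tor2_exact hR N P (ModuleCat.of R X))
  -- the quotient P₁ ⧸ (range d21) is flat
  have hflat1 : Module.Flat R ((P.complex.X 1 : Type u) ⧸ LinearMap.range d21) := by
    have : Module.Flat R (P.complex.X 1 : Type u) := by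
      have := hproj 1; exact Module.Flat.of_projective
    exact flat_quot_of_pure _ hpure
  -- K = range d10 ≃ P₁ ⧸ ker d10 = P₁ ⧸ range d21
  have hflatK : Module.Flat R ↥K := by
    have e : ↥K ≃ₗ[R] ((P.complex.X 1 : Type u) ⧸ LinearMap.range d21) :=
      (d10.quotKerEquivRange).symm.trans
        (Submodule.quotEquivOfEq _ _ hex1.symm)
    exact Module.Flat.of_linearEquiv e
  -- M ⧸ K ≃ N
  have hquot : Nonempty ((M ⧸ K) ≃ₗ[R] N) := by
    set e0 := HomologicalComplex.singleObjXSelf (ComplexShape.down ℕ) 0 (N : ModuleCat.{u} R)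
    set π₀ : M →ₗ[R] N := (P.π.f 0 ≫ e0.hom).hom with hπ₀
    have hsurj : Function.Surjective π₀ := by
      rw [← ModuleCat.epi_iff_surjective (P.π.f 0 ≫ e0.hom)]
      infer_instance
    have hker : LinearMap.ker π₀ = K := by
      have h := P.exact₀
      have h2 := (ShortComplex.moduleCat_exact_iff_range_eq_ker _).mp h
      have : LinearMap.ker π₀ = LinearMap.ker (P.π.f 0).hom := by
        have hmono : Function.Injective e0.hom.hom := by
          rw [← ModuleCat.mono_iff_injective]
          infer_instance
        ext x
        constructor
        · intro hx
          have : e0.hom ((P.π.f 0).hom x) = 0 := hx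
          have := hmono (this.trans (map_zero e0.hom.hom).symm)
          exact this
        · intro hx
          show e0.hom ((P.π.f 0).hom x) = 0
          rw [show (P.π.f 0).hom x = 0 from hx, map_zero]
      rw [this]
      exact h2.symm
    exact ⟨(Submodule.quotEquivOfEq _ _ hker.symm).trans (π₀.quotKerEquivOfSurjective hsurj)⟩
  exact ⟨M, inferInstance, inferInstance, K, hprojM, hflatK, hquot⟩


open LinearMap in
lemma ideal_flat_aux {M : Type u} [AddCommGroup M] [Module R M] [Module.Projective R M]
    (K : Submodule R M) [Module.Flat R ↥K] (I : Ideal R) (e : (M ⧸ K) ≃ₗ[R] (R ⧸ I)) :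
    Module.Flat R ↥I := by
  let f : M →ₗ[R] R ⧸ I := (e : (M ⧸ K) →ₗ[R] R ⧸ I) ∘ₗ K.mkQ
  have hfsurj : Function.Surjective f := e.surjective.comp (Submodule.mkQ_surjective K)
  have hfker : ∀ m : M, f m = 0 ↔ m ∈ K := by
    intro m
    simp only [f, LinearMap.comp_apply, LinearEquiv.coe_coe]
    rw [show ((0 : R ⧸ I) = e 0) by simp, e.injective.eq_iff]
    simp [Submodule.Quotient.mk_eq_zero]
  let g : R →ₗ[R] R ⧸ I := I.mkQ
  have hgsurj : Function.Surjective g := Submodule.mkQ_surjective I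
  let X : Submodule R (M × R) :=
    LinearMap.ker (f ∘ₗ LinearMap.fst R M R - g ∘ₗ LinearMap.snd R M R)
  have hmem : ∀ z : M × R, (z ∈ X ↔ f z.1 = g z.2) := by
    intro z
    simp [X, LinearMap.mem_ker, sub_eq_zero]
  let h₁ : ↥X →ₗ[R] R := LinearMap.snd R M R ∘ₗ X.subtype
  let h₂ : ↥X →ₗ[R] M := LinearMap.fst R M R ∘ₗ X.subtype
  have h₁surj : Function.Surjective h₁ := by
    intro r
    obtain ⟨m, hm⟩ := hfsurj (g r)
    exact ⟨⟨(m, r), (hmem (m, r)).mpr hm⟩, rfl⟩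
  have h₂surj : Function.Surjective h₂ := by
    intro m
    obtain ⟨r, hr⟩ := hgsurj (f m)
    exact ⟨⟨(m, r), (hmem (m, r)).mpr hr.symm⟩, rfl⟩
  obtain ⟨s, hs⟩ := Module.projective_lifting_property h₁ LinearMap.id h₁surj
  obtain ⟨t, ht⟩ := Module.projective_lifting_property h₂ LinearMap.id h₂surj
  -- ker h₁ ≃ K
  have eK : ↥(LinearMap.ker h₁) ≃ₗ[R] ↥K := by
    let φ : ↥(LinearMap.ker h₁) →ₗ[R] M := h₂ ∘ₗ (LinearMap.ker h₁).subtype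
    have hφinj : Function.Injective φ := by
      intro a b hab
      apply Subtype.ext; apply Subtype.ext
      have ha : (a : ↥X).1.2 = 0 := a.2
      have hb : (b : ↥X).1.2 = 0 := b.2
      have : (a : ↥X).1.1 = (b : ↥X).1.1 := hab
      exact Prod.ext this (ha.trans hb.symm)
    have hφrange : LinearMap.range φ = K := by
      ext m
      constructor
      · rintro ⟨⟨⟨⟨m', r⟩, hz⟩, (hk : r = 0)⟩, rfl⟩
        have := (hmem (m', r)).mp hz
        subst hk
        rw [show g 0 = 0 from map_zero g] at this
        exact (hfker m').mp this
      · intro hm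
        have hz : (m, 0) ∈ X := (hmem (m, 0)).mpr (by rw [map_zero]; exact (hfker m).mpr hm)
        exact ⟨⟨⟨(m, 0), hz⟩, rfl⟩, rfl⟩
    exact (LinearEquiv.ofInjective φ hφinj).trans (LinearEquiv.ofEq _ _ hφrange)
  haveI : Module.Flat R ↥(LinearMap.ker h₁) := Module.Flat.of_linearEquiv eK
  haveI hXflat : Module.Flat R ↥X := by
    haveI := flat_prod (R := R) (A := ↥(LinearMap.ker h₁)) (B := R)
    exact Module.Flat.of_linearEquiv (splitEquiv h₁ s hs)
  -- ker h₂ is a retract of X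
  haveI hkh₂flat : Module.Flat R ↥(LinearMap.ker h₂) := by
    have hcod : ∀ x : ↥X, ((LinearMap.id - t ∘ₗ h₂ : ↥X →ₗ[R] ↥X)) x ∈ LinearMap.ker h₂ := by
      intro x
      have h9 : h₂ (t (h₂ x)) = h₂ x := by simpa using LinearMap.congr_fun ht (h₂ x)
      simp [LinearMap.mem_ker, map_sub, h9]
    refine Module.Flat.of_retract (LinearMap.ker h₂).subtype
      (LinearMap.codRestrict _ (LinearMap.id - t ∘ₗ h₂) hcod) ?_
    apply LinearMap.ext
    intro z
    have hz : h₂ (z : ↥X) = 0 := z.2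
    apply Subtype.ext
    simp [LinearMap.codRestrict_apply, hz]
  -- I ≃ ker h₂
  have eI : ↥(LinearMap.ker h₂) ≃ₗ[R] ↥I := by
    let ψ : ↥(LinearMap.ker h₂) →ₗ[R] R := h₁ ∘ₗ (LinearMap.ker h₂).subtype
    have hψinj : Function.Injective ψ := by
      intro a b hab
      apply Subtype.ext; apply Subtype.ext
      have ha : (a : ↥X).1.1 = 0 := a.2
      have hb : (b : ↥X).1.1 = 0 := b.2
      exact Prod.ext (ha.trans hb.symm) hab
    have hψrange : LinearMap.range ψ = I := by
      ext r
      constructor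
      · rintro ⟨⟨⟨⟨m, r'⟩, hz⟩, (hk : m = 0)⟩, rfl⟩
        have := (hmem (m, r')).mp hz
        subst hk
        rw [show f 0 = 0 from map_zero f] at this
        have h6 : g r' = 0 := this.symm
        have h7 : r' ∈ I := by
          rwa [show g r' = Ideal.Quotient.mk I r' from rfl, Ideal.Quotient.eq_zero_iff_mem] at h6
        exact h7
      · intro hr
        have hz : (0, r) ∈ X := by
          rw [hmem (0, r), map_zero]
          symm
          rw [show g r = Ideal.Quotient.mk I r from rfl, Ideal.Quotient.eq_zero_iff_mem]
          exact hr
        exact ⟨⟨⟨(0, r), hz⟩, rfl⟩, rfl⟩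
    exact (LinearEquiv.ofInjective ψ hψinj).trans (LinearEquiv.ofEq _ _ hψrange)
  exact Module.Flat.of_linearEquiv eI.symm


open LinearMap in
lemma ideal_flat {R : Type u} [CommRing R] (hR : WeakGlobalDimLE1 R) (I : Ideal R) :
    Module.Flat R ↥I := by
  obtain ⟨M, _, _, K, hproj, hflat, ⟨e⟩⟩ := syzygy_flat hR (ModuleCat.of R (R ⧸ I))
  haveI := hproj
  haveI := hflat
  exact ideal_flat_aux K I e

open LinearMap in
lemma comparable (hR : WeakGlobalDimLE1 R) (P : Ideal R) [P.IsPrime] (x y : R) :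
    ∃ c : Localization P.primeCompl,
      algebraMap R (Localization P.primeCompl) x * c = algebraMap R (Localization P.primeCompl) y ∨
      algebraMap R (Localization P.primeCompl) y * c = algebraMap R (Localization P.primeCompl) x := by
  set S := Localization P.primeCompl with hS
  set I : Ideal R := Ideal.span {x, y} with hI
  haveI : Module.Flat R ↥I := ideal_flat hR I
  haveI : Module.Flat R S := Localization.flat (p := P.primeCompl)
  set xb := algebraMap R S x with hxb
  set yb := algebraMap R S y with hyb
  -- the map S ⊗ I → S
  set φ : (S ⊗[R] ↥I) →ₗ[S] S :=
    (TensorProduct.AlgebraTensorModule.rid R S S).toLinearMap ∘ₗ I.subtype.baseChange S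
    with hφ
  have hφ_tmul : ∀ (c : S) (a : ↥I), φ (c ⊗ₜ[R] a) = (a : R) • c := by
    intro c a
    simp [hφ, LinearMap.baseChange_tmul]
  have hφinj : Function.Injective φ := by
    apply Function.Injective.comp (TensorProduct.AlgebraTensorModule.rid R S S).injective
    have : ⇑(I.subtype.baseChange S) = ⇑(I.subtype.lTensor S) := by
      rw [LinearMap.baseChange_eq_ltensor]
    show Function.Injective ⇑(I.subtype.baseChange S)
    rw [this]
    exact Module.Flat.lTensor_preserves_injective_linearMap I.subtype Subtype.val_injective
  have hφrange : LinearMap.range φ = (I.map (algebraMap R S) : Ideal S) := by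
    apply le_antisymm
    · rintro _ ⟨w, rfl⟩
      induction w using TensorProduct.induction_on with
      | zero => simp only [map_zero]; exact Submodule.zero_mem _
      | tmul c a =>
        rw [hφ_tmul c a]
        rw [Algebra.smul_def]
        exact Ideal.mul_mem_right _ _ (Ideal.mem_map_of_mem _ a.2)
      | add a b ha hb => rw [map_add]; exact Submodule.add_mem _ ha hb
    · rw [Ideal.map_le_iff_le_comap]
      intro a ha
      refine ⟨(1 : S) ⊗ₜ[R] (⟨a, ha⟩ : ↥I), ?_⟩
      rw [hφ_tmul]
      simp [Algebra.smul_def]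
  haveI hISflat : Module.Flat S ↥(I.map (algebraMap R S) : Ideal S) := by
    haveI : Module.Flat S (S ⊗[R] ↥I) := inferInstance
    exact Module.Flat.of_linearEquiv
      ((LinearEquiv.ofInjective φ hφinj).trans (LinearEquiv.ofEq _ _ hφrange)).symm
  -- the span of xb, yb
  have hmap_span : (I.map (algebraMap R S) : Ideal S) = Ideal.span {xb, yb} := by
    rw [hI, Ideal.map_span, Set.image_insert_eq, Set.image_singleton]
  have hxmem : xb ∈ (I.map (algebraMap R S) : Ideal S) :=
    Ideal.mem_map_of_mem _ (Ideal.subset_span (Set.mem_insert _ _))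
  have hymem : yb ∈ (I.map (algebraMap R S) : Ideal S) :=
    Ideal.mem_map_of_mem _ (Ideal.subset_span (Set.mem_insert_of_mem _ rfl))
  set ι : Type u := ULift.{u} (Fin 2) with hι
  set fv : ι → S := fun i => if i.down = 0 then yb else -xb with hfv
  set xv : ι → ↥(I.map (algebraMap R S) : Ideal S) :=
    fun i => if i.down = 0 then ⟨xb, hxmem⟩ else ⟨yb, hymem⟩ with hxv
  have hsum2 : ∀ (g : ι → S), ∑ i, g i = g ⟨0⟩ + g ⟨1⟩ := by
    intro g
    rw [← Fintype.sum_equiv (Equiv.ulift.symm) (fun j => g (Equiv.ulift.symm j)) g (fun j => rfl)]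
    rw [Fin.sum_univ_two]
    rfl
  have hrel : ∑ i, fv i • xv i = 0 := by
    apply Subtype.ext
    rw [AddSubmonoidClass.coe_finset_sum]
    have hterm : ∀ i, ((fv i • xv i : _) : S) = fv i * (xv i : S) := fun i => rfl
    simp only [hterm]
    rw [hsum2 (fun i => fv i * (xv i : S))]
    simp only [hfv, hxv]
    norm_num
    ring
  obtain ⟨κ, a, z, hz1, hz2⟩ := Module.Flat.isTrivialRelation_of_sum_smul_eq_zero hrel
  have hzmem : ∀ j, (z j : S) ∈ Ideal.span {xb, yb} := fun j => hmap_span ▸ (z j).2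
  choose α β hαβ using fun j => Ideal.mem_span_pair.mp (hzmem j)
  set s := ∑ j, a ⟨0⟩ j * α j with hs
  set uu := ∑ j, a ⟨0⟩ j * β j with huu
  set v := ∑ j, a ⟨1⟩ j * α j with hv
  set tt := ∑ j, a ⟨1⟩ j * β j with htt
  have hcoe : ∀ i, ((xv i : S)) = ∑ j, a i j * (z j : S) := by
    intro i
    rw [congrArg Subtype.val (hz1 i), AddSubmonoidClass.coe_finset_sum]
    exact Finset.sum_congr rfl fun j _ => rfl
  have hexpand : ∀ (c : Fin κ → S), ∑ j, c j * (z j : S)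
      = (∑ j, c j * α j) * xb + (∑ j, c j * β j) * yb := by
    intro c
    rw [Finset.sum_mul, Finset.sum_mul, ← Finset.sum_add_distrib]
    refine Finset.sum_congr rfl fun j _ => ?_
    rw [← hαβ j]
    ring
  have hx : xb = s * xb + uu * yb := by
    have h0 := hcoe ⟨0⟩
    have e0 : ((xv ⟨0⟩ : _) : S) = xb := by simp [hxv]
    rw [e0, hexpand] at h0
    exact h0
  have hy : yb = v * xb + tt * yb := by
    have h1 := hcoe ⟨1⟩
    have e1 : ((xv ⟨1⟩ : _) : S) = yb := by
      simp only [hxv]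
      norm_num
    rw [e1, hexpand] at h1
    exact h1
  -- relations  yb * a ⟨0⟩ j = xb * a ⟨1⟩ j
  have hrelj : ∀ j, yb * a ⟨0⟩ j = xb * a ⟨1⟩ j := by
    intro j
    have h2 := hz2 j
    rw [hsum2 (fun i => fv i * a i j)] at h2
    simp only [hfv] at h2
    norm_num at h2
    linear_combination h2
  have hys : yb * s = xb * v := by
    rw [hs, hv, Finset.mul_sum, Finset.mul_sum]
    exact Finset.sum_congr rfl fun j _ => by rw [← mul_assoc, hrelj j, mul_assoc]
  have hyu : yb * uu = xb * tt := by
    rw [huu, htt, Finset.mul_sum, Finset.mul_sum]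
    exact Finset.sum_congr rfl fun j _ => by rw [← mul_assoc, hrelj j, mul_assoc]
  have hx0 : xb * (1 - s - tt) = 0 := by linear_combination hx + hyu
  have hy0 : yb * (1 - s - tt) = 0 := by linear_combination hy - hys
  by_cases hunit : IsUnit (1 - s - tt)
  · obtain ⟨w, hw⟩ := hunit
    refine ⟨0, Or.inr ?_⟩
    rw [mul_zero]
    have h3 : xb = 0 := by
      calc xb = xb * (↑w * ↑w⁻¹) := by rw [Units.mul_inv, mul_one]
        _ = xb * ((1 - s - tt) * ↑w⁻¹) := by rw [hw]
        _ = 0 := by rw [← mul_assoc, hx0, zero_mul]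
    exact h3.symm
  · have hst : IsUnit (s + tt) := by
      rcases IsLocalRing.isUnit_or_isUnit_one_sub_self (s + tt) with h | h
      · exact h
      · exact absurd (by rwa [show (1 : S) - (s + tt) = 1 - s - tt by ring] at h) hunit
    rcases IsLocalRing.isUnit_or_isUnit_of_isUnit_add hst with h | h
    · obtain ⟨w, hw⟩ := h
      refine ⟨v * ↑w⁻¹, Or.inl ?_⟩
      calc xb * (v * ↑w⁻¹) = (xb * v) * ↑w⁻¹ := by ring
        _ = (yb * s) * ↑w⁻¹ := by rw [hys]
        _ = yb * (↑w * ↑w⁻¹) := by rw [hw]; ring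
        _ = yb := by rw [Units.mul_inv, mul_one]
    · obtain ⟨w, hw⟩ := h
      refine ⟨uu * ↑w⁻¹, Or.inr ?_⟩
      calc yb * (uu * ↑w⁻¹) = (yb * uu) * ↑w⁻¹ := by ring
        _ = (xb * tt) * ↑w⁻¹ := by rw [hyu]
        _ = xb * (↑w * ↑w⁻¹) := by rw [hw]; ring
        _ = xb := by rw [Units.mul_inv, mul_one]


/-- If a commutative ring of weak global dimension at most one has an infinite strictly
ascending chain of primes, then some prime `p` has `pR_p` a nonzero idempotent ideal of
`R_p`. -/
theorem stmt19 (R : Type u) [CommRing R] (hR : WeakGlobalDimLE1 R)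
    (p : ℕ → Ideal R) (hprime : ∀ i, (p i).IsPrime) (hchain : ∀ i, p i < p (i + 1)) :
    ∃ (P : Ideal R) (hP : P.IsPrime),
      P.map (algebraMap R (Localization (P.primeCompl (hp := hP)))) ≠ ⊥ ∧
        P.map (algebraMap R (Localization (P.primeCompl (hp := hP)))) ^ 2 =
          P.map (algebraMap R (Localization (P.primeCompl (hp := hP)))) := by
  classical
  set P : Ideal R := ⨆ i, p i with hPdef
  have hmono : Monotone p := monotone_nat_of_le_succ (fun i => (hchain i).le)
  have hdir : Directed (· ≤ ·) p := hmono.directed_le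
  have hmem : ∀ x : R, x ∈ P ↔ ∃ i, x ∈ p i :=
    fun x => Submodule.mem_iSup_of_directed p hdir
  have hle : ∀ i, p i ≤ P := fun i => le_iSup p i
  have hP : P.IsPrime := by
    constructor
    · intro htop
      have h1 : (1 : R) ∈ P := htop ▸ Submodule.mem_top
      obtain ⟨i, hi⟩ := (hmem 1).mp h1
      exact (hprime i).ne_top (Ideal.eq_top_iff_one _ |>.mpr hi)
    · intro a b hab
      obtain ⟨i, hi⟩ := (hmem _).mp hab
      rcases (hprime i).mem_or_mem hi with h | h
      · exact Or.inl ((hmem a).mpr ⟨i, h⟩)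
      · exact Or.inr ((hmem b).mpr ⟨i, h⟩)
  haveI := hP
  refine ⟨P, hP, ?_, ?_⟩
  · -- nonzero
    intro hbot
    obtain ⟨x, hx1, hx0⟩ := SetLike.exists_of_lt (hchain 0)
    have hxP : x ∈ P := (hmem x).mpr ⟨1, hx1⟩
    have hxm : algebraMap R (Localization P.primeCompl) x
        ∈ P.map (algebraMap R (Localization P.primeCompl)) := Ideal.mem_map_of_mem _ hxP
    rw [hbot] at hxm
    have hzero : algebraMap R (Localization P.primeCompl) x = 0 := Ideal.mem_bot.mp hxm
    obtain ⟨m, hm⟩ :=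
      (IsLocalization.map_eq_zero_iff P.primeCompl (Localization P.primeCompl) x).mp hzero
    have h0 : (m : R) * x ∈ p 0 := by rw [hm]; exact (p 0).zero_mem
    rcases (hprime 0).mem_or_mem h0 with h | h
    · exact m.2 ((hmem _).mpr ⟨0, h⟩)
    · exact hx0 h
  · -- idempotent
    apply le_antisymm
    · exact Ideal.pow_le_self two_ne_zero
    · rw [show P.map (algebraMap R (Localization P.primeCompl)) ^ 2
          = P.map (algebraMap R (Localization P.primeCompl)) *
            P.map (algebraMap R (Localization P.primeCompl)) from sq _]
      rw [Ideal.map_le_iff_le_comap]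
      intro x hxP
      obtain ⟨i, hxi⟩ := (hmem x).mp hxP
      obtain ⟨y, hy1, hy0⟩ := SetLike.exists_of_lt (hchain i)
      have hdisj : Disjoint (↑P.primeCompl : Set R) (↑(p i) : Set R) := by
        rw [Set.disjoint_left]
        intro a ha ha'
        exact ha (hle i ha')
      have hprime_map : (Ideal.map (algebraMap R (Localization P.primeCompl)) (p i)).IsPrime :=
        IsLocalization.isPrime_of_isPrime_disjoint P.primeCompl _ (p i) (hprime i) hdisj
      have hcomap :
          Ideal.comap (algebraMap R (Localization P.primeCompl))
            (Ideal.map (algebraMap R (Localization P.primeCompl)) (p i)) = p i :=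
        IsLocalization.under_map_of_isPrime_disjoint P.primeCompl _ (hprime i) hdisj
      have hynotin : algebraMap R (Localization P.primeCompl) y
          ∉ Ideal.map (algebraMap R (Localization P.primeCompl)) (p i) := by
        intro hy
        have : y ∈ p i := by rw [← hcomap]; exact hy
        exact hy0 this
      have hxin : algebraMap R (Localization P.primeCompl) x
          ∈ Ideal.map (algebraMap R (Localization P.primeCompl)) (p i) :=
        Ideal.mem_map_of_mem _ hxi
      obtain ⟨c, hc⟩ := comparable hR P x y
      show algebraMap R (Localization P.primeCompl) x
        ∈ P.map (algebraMap R (Localization P.primeCompl)) *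
          P.map (algebraMap R (Localization P.primeCompl))
      rcases hc with hc | hc
      · -- xb * c = yb : contradiction
        exfalso
        apply hynotin
        rw [← hc]
        exact Ideal.mul_mem_right _ _ hxin
      · -- yb * c = xb
        have hcmem : c ∈ Ideal.map (algebraMap R (Localization P.primeCompl)) (p i) := by
          rcases hprime_map.mem_or_mem (hc ▸ hxin) with h | h
          · exact absurd h hynotin
          · exact h
        have hcP : c ∈ P.map (algebraMap R (Localization P.primeCompl)) :=
          Ideal.map_mono (hle i) hcmem
        have hyP : algebraMap R (Localization P.primeCompl) y
            ∈ P.map (algebraMap R (Localization P.primeCompl)) :=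
          Ideal.mem_map_of_mem _ ((hmem y).mpr ⟨i + 1, hy1⟩)
        rw [← hc]
        exact Ideal.mul_mem_mul hyP hcP


end Main
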